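/- arXiv:1710.11088 — 4 statements merged into one kernel-verified Lean document; each statement's English description precedes it below -/
import Mathlib

section
/- Let J_O(η) be the 6×6 block matrix diag{I_3, J_θ(η)} where J_θ(η) is the Euler-angle rate matrix for the ZYX (roll-pitch-yaw) convention with pitch angle θ. Then the spectral norm of the inverse satisfies ‖J_O(η)^{-1}‖ = √(1 + |sin θ|) ≤ √2 for all θ ∈ (−π/2, π/2). -/
open Matrix Real

/-- Spectral (ℓ²-operator) norm of a real matrix. -/
noncomputable def specNorm {m n : Type*} [Fintype m] [Fintype n] [DecidableEq n]
    (A : Matrix m n ℝ) : ℝ :=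
  ‖LinearMap.toContinuousLinearMap (Matrix.toEuclideanLin A)‖

/-- The Euler-angle rate matrix `J_θ(η)⁻¹` mapping `η̇` to `ω` for the ZYX
(roll-pitch-yaw) convention, with roll `φ` and pitch `θ`. -/
noncomputable def eulerRateInv (φ θ : ℝ) : Matrix (Fin 3) (Fin 3) ℝ :=
  !![1, 0, -Real.sin θ;
     0, Real.cos φ, Real.cos θ * Real.sin φ;
     0, -Real.sin φ, Real.cos θ * Real.cos φ]

/-- `J_O(η)⁻¹ = diag{I₃, J_θ(η)⁻¹}`. -/
noncomputable def JOinv (φ θ : ℝ) : Matrix (Fin 3 ⊕ Fin 3) (Fin 3 ⊕ Fin 3) ℝ :=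
  Matrix.fromBlocks (1 : Matrix (Fin 3) (Fin 3) ℝ) 0 0 (eulerRateInv φ θ)

set_option maxHeartbeats 1000000 in
lemma JO_normSq (φ θ : ℝ) (v : EuclideanSpace ℝ (Fin 3 ⊕ Fin 3)) :
    ‖(Matrix.toEuclideanLin (JOinv φ θ)) v‖ ^ 2 =
      (v (.inl 0))^2 + (v (.inl 1))^2 + (v (.inl 2))^2 +
      ((v (.inr 0))^2 + (v (.inr 1))^2 + (v (.inr 2))^2
        - 2 * Real.sin θ * v (.inr 0) * v (.inr 2)) := by
  rw [EuclideanSpace.norm_eq, Real.sq_sqrt (by positivity)]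
  have hs := Real.sin_sq_add_cos_sq θ
  have hp := Real.sin_sq_add_cos_sq φ
  simp only [Matrix.toEuclideanLin_apply, Real.norm_eq_abs, sq_abs,
    Fintype.sum_sum_type, Fin.sum_univ_three,
    Matrix.mulVec, dotProduct, JOinv, eulerRateInv, Matrix.fromBlocks,
    Matrix.of_apply, Sum.elim_inl, Sum.elim_inr, Matrix.one_apply,
    Matrix.zero_apply, Matrix.cons_val_zero, Matrix.cons_val_one,
    Matrix.cons_val_two, Matrix.head_cons, Matrix.vecHead, Matrix.vecTail,
    PiLp.toLp_apply, WithLp.ofLp_toLp]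
  norm_num [Fin.ext_iff, Matrix.cons_val_two, Matrix.tail_cons, Matrix.head_cons]
  linear_combination (v (Sum.inr 1))^2 * hp + (v (Sum.inr 2))^2 * hs + (v (Sum.inr 2))^2 * (cos θ)^2 * (hp - 1)

lemma vec_normSq (v : EuclideanSpace ℝ (Fin 3 ⊕ Fin 3)) :
    ‖v‖ ^ 2 = (v (.inl 0))^2 + (v (.inl 1))^2 + (v (.inl 2))^2 +
      ((v (.inr 0))^2 + (v (.inr 1))^2 + (v (.inr 2))^2) := by
  rw [EuclideanSpace.norm_eq, Real.sq_sqrt (by positivity)]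
  simp [Fintype.sum_sum_type, Fin.sum_univ_three, sq_abs]


/-- For the 6×6 block matrix `J_O(η) = diag{I₃, J_θ(η)}` of the ZYX Euler-angle
representation Jacobian, the spectral norm of the inverse satisfies
`‖J_O(η)⁻¹‖ = √(1 + |sin θ|) ≤ √2` for all pitch angles `θ ∈ (−π/2, π/2)`. -/
theorem stmt3 (φ θ ψ : ℝ) (hθ : θ ∈ Set.Ioo (-(π / 2)) (π / 2)) :
    specNorm (JOinv φ θ) = Real.sqrt (1 + |Real.sin θ|) ∧
      specNorm (JOinv φ θ) ≤ Real.sqrt 2 := by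
  have habs : |Real.sin θ| ≤ 1 := abs_le.2 ⟨Real.neg_one_le_sin θ, Real.sin_le_one θ⟩
  have h1 : (0:ℝ) ≤ 1 + |Real.sin θ| := by positivity
  have key : specNorm (JOinv φ θ) = Real.sqrt (1 + |Real.sin θ|) := by
    apply le_antisymm
    · apply ContinuousLinearMap.opNorm_le_bound _ (Real.sqrt_nonneg _)
      intro v
      have hTv : ‖(Matrix.toEuclideanLin (JOinv φ θ)) v‖ ^ 2
          ≤ (1 + |Real.sin θ|) * ‖v‖ ^ 2 := by
        rw [JO_normSq, vec_normSq]
        set a := v (.inl 0); set b := v (.inl 1); set c := v (.inl 2)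
        set x := v (.inr 0); set y := v (.inr 1); set z := v (.inr 2)
        have h2 : -(2 * Real.sin θ * x * z) ≤ |Real.sin θ| * (x^2 + z^2) := by
          have := neg_abs_le (2 * Real.sin θ * x * z)
          have h3 : |2 * Real.sin θ * x * z| ≤ |Real.sin θ| * (x^2 + z^2) := by
            rw [abs_mul, abs_mul, abs_mul, abs_two]
            have : |x| * |z| * 2 ≤ x^2 + z^2 := by
              nlinarith [sq_nonneg (|x| - |z|), sq_abs x, sq_abs z]
            nlinarith [abs_nonneg (Real.sin θ), abs_nonneg x, abs_nonneg z]
          linarith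
        nlinarith [abs_nonneg (Real.sin θ), sq_nonneg a, sq_nonneg b, sq_nonneg c,
          sq_nonneg y]
      have := Real.sqrt_le_sqrt hTv
      rwa [Real.sqrt_sq (norm_nonneg _), Real.sqrt_mul h1, Real.sqrt_sq (norm_nonneg _)]
        at this
    · set c : ℝ := if 0 ≤ Real.sin θ then (-1:ℝ) else 1 with hc
      have hc2 : c ^ 2 = 1 := by rw [hc]; split <;> norm_num
      have hsc : Real.sin θ * c = -|Real.sin θ| := by
        rw [hc]; split
        · rw [abs_of_nonneg ‹_›]; ring
        · rw [abs_of_neg (lt_of_not_ge ‹_›)]; ring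
      set v₀ : EuclideanSpace ℝ (Fin 3 ⊕ Fin 3) :=
        (WithLp.equiv 2 _).symm (Sum.elim ![0,0,0] ![1,0,c]) with hv₀
      have hv0i : ∀ i, v₀ i = Sum.elim ![(0:ℝ),0,0] ![1,0,c] i := fun i => rfl
      have hnv : ‖v₀‖ ^ 2 = 2 := by
        rw [vec_normSq]; simp only [hv0i]; norm_num [hc2, Matrix.cons_val_two, Matrix.tail_cons, Matrix.head_cons]
      have hTn : ‖(Matrix.toEuclideanLin (JOinv φ θ)) v₀‖ ^ 2 = (1 + |Real.sin θ|) * 2 := by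
        rw [JO_normSq]; simp only [hv0i]; simp
        nlinarith [hc2, hsc]
      have hpos : (0:ℝ) < ‖v₀‖ := by
        nlinarith [norm_nonneg v₀, hnv]
      have hle := (LinearMap.toContinuousLinearMap
          (Matrix.toEuclideanLin (JOinv φ θ))).le_opNorm v₀
      have hTv0 : ‖(Matrix.toEuclideanLin (JOinv φ θ)) v₀‖
          = Real.sqrt (1 + |Real.sin θ|) * ‖v₀‖ := by
        have : Real.sqrt (‖(Matrix.toEuclideanLin (JOinv φ θ)) v₀‖ ^ 2)
            = Real.sqrt ((1 + |Real.sin θ|) * ‖v₀‖ ^ 2) := by rw [hTn, hnv]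
        rwa [Real.sqrt_sq (norm_nonneg _), Real.sqrt_mul h1, Real.sqrt_sq (norm_nonneg _)]
          at this
      have : Real.sqrt (1 + |Real.sin θ|) * ‖v₀‖ ≤ specNorm (JOinv φ θ) * ‖v₀‖ := by
        rw [← hTv0]; exact hle
      exact le_of_mul_le_mul_right this hpos
  refine ⟨key, ?_⟩
  rw [key]
  exact Real.sqrt_le_sqrt (by linarith)
end

section
/- Under the same setup, the spectral norm of J_O(η) satisfies ‖J_O(η)‖ = √((|sin θ| + 1)/(1 − sin²θ)) for all pitch angles θ ∈ (−π/2, π/2); in particular ‖J_O(η)‖ → ∞ as θ → ±π/2. -/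
open Matrix Real

/-- The Euler-angle rate matrix `J_θ(η)` mapping `ω` to `η̇` for the ZYX
(roll-pitch-yaw) convention, with roll `φ` and pitch `θ`. -/
noncomputable def eulerRate (φ θ : ℝ) : Matrix (Fin 3) (Fin 3) ℝ :=
  !![1, Real.sin φ * Real.tan θ, Real.cos φ * Real.tan θ;
     0, Real.cos φ, -Real.sin φ;
     0, Real.sin φ / Real.cos θ, Real.cos φ / Real.cos θ]

/-- The object representation Jacobian `J_O(η) = diag{I₃, J_θ(η)}`. -/
noncomputable def JO (φ θ : ℝ) : Matrix (Fin 3 ⊕ Fin 3) (Fin 3 ⊕ Fin 3) ℝ :=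
  Matrix.fromBlocks (1 : Matrix (Fin 3) (Fin 3) ℝ) 0 0 (eulerRate φ θ)

open Filter

lemma key_ineq (s c a z1 w : ℝ) (hsc : s^2+c^2=1) (hc : 0 < c) (ha : a = |s|) :
    2*c*s*z1*w + 2*s^2*w^2 ≤ a*(1+a)*(z1^2 + w^2) := by
  rcases eq_or_ne s 0 with h|h
  · subst h; simp [ha]
  · have ha0 : 0 < a := ha ▸ abs_pos.2 h
    have ha2 : a^2 = s^2 := by rw [ha]; exact sq_abs s
    have h3 : (0:ℝ) < a + a^2 := by positivity
    have cert : (a+a^2) * (a*(1+a)*(z1^2+w^2) - (2*c*s*z1*w + 2*s^2*w^2))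
        = ((a+a^2)*z1 - c*s*w)^2 := by
      linear_combination (w^2*(1-a^2-s^2) + 2*a*w^2 + 2*a^2*w^2) * ha2 - (w^2*s^2) * hsc
    nlinarith [cert, sq_nonneg ((a+a^2)*z1 - c*s*w), h3]


lemma sqrt_atTop : Tendsto Real.sqrt atTop atTop := by
  apply tendsto_atTop_atTop.mpr
  intro b
  refine ⟨(max b 0)^2, fun x hx => ?_⟩
  have h0 : 0 ≤ max b 0 := le_max_right _ _
  calc b ≤ max b 0 := le_max_left _ _
    _ = Real.sqrt ((max b 0)^2) := (Real.sqrt_sq h0).symm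
    _ ≤ Real.sqrt x := Real.sqrt_le_sqrt hx

lemma lim_half (x₀ : ℝ) (hsin : Real.sin x₀ = 1 ∨ Real.sin x₀ = -1) (S : Set ℝ)
    (hmem : ∀ᶠ θ in nhdsWithin x₀ S, Real.sin θ ^ 2 < 1) :
    Tendsto (fun θ : ℝ => Real.sqrt ((|Real.sin θ| + 1) / (1 - Real.sin θ ^ 2)))
      (nhdsWithin x₀ S) atTop := by
  apply sqrt_atTop.comp
  have h1 : Tendsto (fun θ : ℝ => |Real.sin θ| + 1) (nhdsWithin x₀ S) (nhds 2) := by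
    apply tendsto_nhdsWithin_of_tendsto_nhds
    have hcont : Continuous fun θ : ℝ => |Real.sin θ| + 1 := by continuity
    have habs : |Real.sin x₀| + 1 = 2 := by rcases hsin with h' | h' <;> rw [h'] <;> norm_num
    exact habs ▸ hcont.tendsto x₀
  have h2 : Tendsto (fun θ : ℝ => 1 - Real.sin θ ^ 2) (nhdsWithin x₀ S) (nhdsWithin 0 (Set.Ioi 0)) := by
    rw [tendsto_nhdsWithin_iff]
    constructor
    · apply tendsto_nhdsWithin_of_tendsto_nhds
      have hcont : Continuous fun θ : ℝ => 1 - Real.sin θ ^ 2 := by continuity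
      have hval : 1 - Real.sin x₀ ^ 2 = 0 := by rcases hsin with h' | h' <;> rw [h'] <;> norm_num
      exact hval ▸ hcont.tendsto x₀
    · filter_upwards [hmem] with θ hθ
      simp only [Set.mem_Ioi]
      linarith
  have h3 : Tendsto (fun θ : ℝ => (1 - Real.sin θ ^ 2)⁻¹) (nhdsWithin x₀ S) atTop :=
    tendsto_inv_nhdsGT_zero.comp h2
  have := Filter.Tendsto.pos_mul_atTop (by norm_num : (0:ℝ) < 2) h1 h3
  simpa [div_eq_mul_inv] using this

set_option maxHeartbeats 2000000 in
lemma upper_bound (φ θ : ℝ) (hθ : θ ∈ Set.Ioo (-(π / 2)) (π / 2)) :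
    specNorm (JO φ θ) ≤ Real.sqrt ((|Real.sin θ| + 1) / (1 - Real.sin θ ^ 2)) := by
  have hc : 0 < Real.cos θ := Real.cos_pos_of_mem_Ioo hθ
  have hsc : Real.sin θ ^ 2 + Real.cos θ ^ 2 = 1 := Real.sin_sq_add_cos_sq θ
  have hc2 : (0:ℝ) < 1 - Real.sin θ ^ 2 := by nlinarith
  have hK0 : (0:ℝ) ≤ (|Real.sin θ| + 1) / (1 - Real.sin θ ^ 2) := by positivity
  apply ContinuousLinearMap.opNorm_le_bound _ (Real.sqrt_nonneg _)
  intro x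
  rw [LinearMap.coe_toContinuousLinearMap', EuclideanSpace.norm_eq, EuclideanSpace.norm_eq,
    ← Real.sqrt_mul hK0]
  apply Real.sqrt_le_sqrt
  simp only [Matrix.toEuclideanLin_apply, JO, eulerRate, WithLp.equiv_symm_apply, PiLp.toLp_apply, Matrix.cons_val_two,
    WithLp.equiv_apply, Fintype.sum_sum_type, Fin.sum_univ_three, Matrix.mulVec,
    dotProduct,
    Matrix.fromBlocks_apply₁₁, Matrix.fromBlocks_apply₁₂, Matrix.fromBlocks_apply₂₁,
    Matrix.fromBlocks_apply₂₂, Matrix.one_apply, Matrix.zero_apply,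
    Matrix.cons_val', Matrix.cons_val_zero, Matrix.cons_val_one, Matrix.head_cons,
    Matrix.empty_val', Matrix.cons_val_fin_one, Matrix.head_fin_const,
    Real.norm_eq_abs, sq_abs]
  norm_num [Matrix.cons_val_two, Matrix.vecHead, Matrix.vecTail, Fin.ext_iff]
  rw [Real.tan_eq_sin_div_cos]
  set y1 := x (Sum.inl 0); set y2 := x (Sum.inl 1); set y3 := x (Sum.inl 2)
  set z1 := x (Sum.inr 0); set z2 := x (Sum.inr 1); set z3 := x (Sum.inr 2)
  set s := Real.sin θ; set c := Real.cos θ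
  set p := Real.cos φ; set q := Real.sin φ
  have hpq : q^2 + p^2 = 1 := Real.sin_sq_add_cos_sq φ
  have h1s : (1:ℝ) - s^2 = c^2 := by linarith
  rw [h1s, div_mul_eq_mul_div (|s| + 1) (c^2), le_div_iff₀ (by positivity : (0:ℝ) < c^2)]
  have hc0 : c ≠ 0 := hc.ne'
  have F1 := key_ineq s c (|s|) z1 (q*z2+p*z3) hsc hc rfl
  have F5 : (p*z2 - q*z3)^2 + (q*z2+p*z3)^2 = z2^2+z3^2 := by
    linear_combination (z2^2+z3^2) * hpq
  have Fw : (q*z2+p*z3)^2 ≤ z2^2+z3^2 := by nlinarith [sq_nonneg (p*z2 - q*z3)]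
  have ha0 : (0:ℝ) ≤ |s| := abs_nonneg s
  have F3 : 0 ≤ |s| * (1+|s|) * (z2^2+z3^2 - (q*z2+p*z3)^2) :=
    mul_nonneg (by positivity) (by linarith)
  have F4 : 0 ≤ |s| * (1+|s|) * (y1^2+y2^2+y3^2) := by positivity
  have F5c : c^2*((p*z2-q*z3)^2) + c^2*((q*z2+p*z3)^2) = c^2*(z2^2+z3^2) := by
    linear_combination c^2 * F5
  have hA2N : |s|^2 * (y1^2+y2^2+y3^2+z1^2+z2^2+z3^2) = s^2 * (y1^2+y2^2+y3^2+z1^2+z2^2+z3^2) := by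
    rw [sq_abs]
  have hscN : s^2 * (y1^2+y2^2+y3^2+z1^2+z2^2+z3^2) + c^2 * (y1^2+y2^2+y3^2+z1^2+z2^2+z3^2)
      = (y1^2+y2^2+y3^2+z1^2+z2^2+z3^2) := by
    linear_combination (y1^2+y2^2+y3^2+z1^2+z2^2+z3^2) * hsc
  have hscw : s^2*(q*z2+p*z3)^2 + c^2*(q*z2+p*z3)^2 = (q*z2+p*z3)^2 := by
    linear_combination (q*z2+p*z3)^2 * hsc
  field_simp
  linarith [F1, F3, F4, F5c, hA2N, hscN, hscw]

set_option maxHeartbeats 2000000 in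
lemma lower_bound (φ θ : ℝ) (hθ : θ ∈ Set.Ioo (-(π / 2)) (π / 2)) :
    Real.sqrt ((|Real.sin θ| + 1) / (1 - Real.sin θ ^ 2)) ≤ specNorm (JO φ θ) := by
  have hc : 0 < Real.cos θ := Real.cos_pos_of_mem_Ioo hθ
  have hsc : Real.sin θ ^ 2 + Real.cos θ ^ 2 = 1 := Real.sin_sq_add_cos_sq θ
  have hpq : Real.sin φ ^ 2 + Real.cos φ ^ 2 = 1 := Real.sin_sq_add_cos_sq φ
  have hc2 : (0:ℝ) < 1 - Real.sin θ ^ 2 := by nlinarith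
  set s := Real.sin θ with hs
  set c := Real.cos θ with hcdef
  set p := Real.cos φ
  set q := Real.sin φ
  set a := |s| with hadef
  have ha2 : a^2 = s^2 := sq_abs s
  have ha0 : 0 ≤ a := abs_nonneg s
  have hc0 : c ≠ 0 := hc.ne'
  unfold specNorm
  set f := LinearMap.toContinuousLinearMap (Matrix.toEuclideanLin (JO φ θ)) with hf
  rcases eq_or_ne s 0 with hs0 | hs0
  · -- a = 0, norm is 1, witness e₁
    have ha' : a = 0 := by simp [hadef, hs0]
    rw [hs0, ha']
    norm_num
    set v : EuclideanSpace ℝ (Fin 3 ⊕ Fin 3) :=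
      (WithLp.equiv 2 _).symm (Sum.elim ![1,0,0] ![0,0,0]) with hv
    have himg : Matrix.toEuclideanLin (JO φ θ) v = v := by
      ext i
      rcases i with i | i <;> fin_cases i <;>
        simp [hv, Matrix.toEuclideanLin_apply, JO, eulerRate, WithLp.equiv_symm_apply, PiLp.toLp_apply, Matrix.cons_val_two,
          WithLp.equiv_apply, Matrix.mulVec, dotProduct, Fintype.sum_sum_type,
          Fin.sum_univ_three, Matrix.one_apply, Fin.ext_iff]
    have hnv : ‖v‖ = 1 := by
      rw [EuclideanSpace.norm_eq]
      norm_num [hv, Fintype.sum_sum_type, Fin.sum_univ_three, WithLp.equiv_symm_apply, PiLp.toLp_apply, Matrix.cons_val_two]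
    have h1 := f.le_opNorm v
    rw [hf] at h1
    rw [LinearMap.coe_toContinuousLinearMap'] at h1
    rw [himg, hnv, mul_one] at h1
    exact h1
  · have ha0' : 0 < a := abs_pos.2 hs0
    have ha1 : a < 1 := by
      rw [hadef, abs_lt]; constructor <;> nlinarith
    set v : EuclideanSpace ℝ (Fin 3 ⊕ Fin 3) :=
      (WithLp.equiv 2 _).symm (Sum.elim ![0,0,0] ![s*(1-a), q*a*c, p*a*c]) with hv
    have himg : Matrix.toEuclideanLin (JO φ θ) v =
        (WithLp.equiv 2 _).symm (Sum.elim ![0,0,0] ![s, 0, a]) := by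
      ext i
      rcases i with i | i <;> fin_cases i <;>
        simp only [hv, Matrix.toEuclideanLin_apply, JO, eulerRate, WithLp.equiv_symm_apply, PiLp.toLp_apply, Matrix.cons_val_two,
          WithLp.equiv_apply, Matrix.mulVec, dotProduct, Fintype.sum_sum_type,
          Fin.sum_univ_three, Matrix.fromBlocks_apply₁₁, Matrix.fromBlocks_apply₁₂,
          Matrix.fromBlocks_apply₂₁, Matrix.fromBlocks_apply₂₂, Matrix.one_apply,
          Matrix.zero_apply, Matrix.cons_val', Matrix.cons_val_zero, Matrix.cons_val_one,
          Matrix.head_cons, Matrix.empty_val', Matrix.cons_val_fin_one, Matrix.head_fin_const,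
          Real.norm_eq_abs, Sum.elim_inl, Sum.elim_inr] <;>
        norm_num [Matrix.cons_val_two, Matrix.vecHead, Matrix.vecTail, Fin.ext_iff, Real.tan_eq_sin_div_cos]
      · field_simp
        linear_combination (s*a)*(Real.sin_sq_add_cos_sq φ) + (s*a*Real.sin φ^2 + s*a*Real.cos φ^2)*(mul_inv_cancel₀ hc0)
      · ring
      · field_simp
        linear_combination (1)*(Real.sin_sq_add_cos_sq φ) + (Real.sin φ^2 + Real.cos φ^2)*(mul_inv_cancel₀ hc0)
    have hnv2 : ‖v‖^2 = 2*a^2*(1-a) := by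
      rw [EuclideanSpace.norm_eq, Real.sq_sqrt (by positivity)]
      norm_num [hv, Fintype.sum_sum_type, Fin.sum_univ_three, WithLp.equiv_symm_apply, PiLp.toLp_apply, Matrix.cons_val_two]
      linear_combination (a^2*c^2)*hpq + ((1-a)^2 - a^2 + 4*a - 2)*ha2 + (a^2)*hsc
    have hni2 : ‖Matrix.toEuclideanLin (JO φ θ) v‖^2 = 2*a^2 := by
      rw [himg, EuclideanSpace.norm_eq, Real.sq_sqrt (by positivity)]
      norm_num [Fintype.sum_sum_type, Fin.sum_univ_three, WithLp.equiv_symm_apply, PiLp.toLp_apply, Matrix.cons_val_two]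
      linear_combination -ha2
    have hvpos : 0 < ‖v‖ := by
      have h' : ‖v‖^2 > 0 := by rw [hnv2]; nlinarith [mul_pos (mul_pos ha0' ha0') (by linarith : (0:ℝ) < 1 - a)]
      have := norm_nonneg v
      nlinarith
    have hKv : Real.sqrt ((a+1)/(1-s^2)) * ‖v‖ = ‖Matrix.toEuclideanLin (JO φ θ) v‖ := by
      have h2 : 0 ≤ Real.sqrt ((a+1)/(1-s^2)) * ‖v‖ := by positivity
      have h1 : (Real.sqrt ((a+1)/(1-s^2)) * ‖v‖)^2 = ‖Matrix.toEuclideanLin (JO φ θ) v‖^2 := by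
        rw [mul_pow, Real.sq_sqrt (by positivity), hnv2, hni2]
        field_simp
        linear_combination (-1)*ha2
      calc Real.sqrt ((a+1)/(1-s^2)) * ‖v‖
          = Real.sqrt ((Real.sqrt ((a+1)/(1-s^2)) * ‖v‖)^2) := (Real.sqrt_sq h2).symm
        _ = Real.sqrt (‖Matrix.toEuclideanLin (JO φ θ) v‖^2) := by rw [h1]
        _ = ‖Matrix.toEuclideanLin (JO φ θ) v‖ := Real.sqrt_sq (norm_nonneg _)
    have h3 := f.le_opNorm v
    rw [hf, LinearMap.coe_toContinuousLinearMap'] at h3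
    rw [← hKv] at h3
    have := le_of_mul_le_mul_right h3 hvpos
    calc Real.sqrt ((a+1)/(1-s^2)) ≤ ‖f‖ := this
      _ = _ := by rw [hf]

open Filter in
/-- The spectral norm of `J_O(η) = diag{I₃, J_θ(η)}` satisfies
`‖J_O(η)‖ = √((|sin θ| + 1)/(1 − sin²θ))` for all pitch angles `θ ∈ (−π/2, π/2)`;
in particular `‖J_O(η)‖ → ∞` as `θ → ±π/2`. -/
theorem stmt4 :
    (∀ (φ θ ψ : ℝ), θ ∈ Set.Ioo (-(π / 2)) (π / 2) →
      specNorm (JO φ θ) = Real.sqrt ((|Real.sin θ| + 1) / (1 - Real.sin θ ^ 2))) ∧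
    Filter.Tendsto (fun θ : ℝ => Real.sqrt ((|Real.sin θ| + 1) / (1 - Real.sin θ ^ 2)))
      (nhdsWithin (π / 2) (Set.Iio (π / 2))) Filter.atTop ∧
    Filter.Tendsto (fun θ : ℝ => Real.sqrt ((|Real.sin θ| + 1) / (1 - Real.sin θ ^ 2)))
      (nhdsWithin (-(π / 2)) (Set.Ioi (-(π / 2)))) Filter.atTop := by
  refine ⟨fun φ θ ψ hθ => le_antisymm (upper_bound φ θ hθ) (lower_bound φ θ hθ), ?_, ?_⟩
  · apply lim_half
    · left; exact Real.sin_pi_div_two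
    · have h1 : Set.Ioi (-(π/2)) ∈ nhds (π/2) := Ioi_mem_nhds (by linarith [Real.pi_pos])
      filter_upwards [mem_nhdsWithin_of_mem_nhds h1, self_mem_nhdsWithin] with θ h2 h3
      have hc : 0 < Real.cos θ := Real.cos_pos_of_mem_Ioo ⟨h2, h3⟩
      nlinarith [Real.sin_sq_add_cos_sq θ]
  · apply lim_half
    · right; simpa using Real.sin_pi_div_two
    · have h1 : Set.Iio (π/2) ∈ nhds (-(π/2)) := Iio_mem_nhds (by linarith [Real.pi_pos])
      filter_upwards [mem_nhdsWithin_of_mem_nhds h1, self_mem_nhdsWithin] with θ h2 h3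
      have hc : 0 < Real.cos θ := Real.cos_pos_of_mem_Ioo ⟨h3, h2⟩
      nlinarith [Real.sin_sq_add_cos_sq θ]
end

section
/- Suppose for each i, the matrix Ṁᵢ − 2Cᵢ is skew-symmetric and Ṁ_O − 2C_O is skew-symmetric. Define M̃ = M_O + G^T M G and C̃ = C_O + G^T C G + G^T M Ġ, where M = diag{Mᵢ}, C = diag{Cᵢ}, and G = G(t) is a differentiable matrix-valued function. Then the matrix d/dt(M̃) − 2C̃ is skew-symmetric. -/
open Matrix

/-- If each `Ṁᵢ − 2Cᵢ` and `Ṁ_O − 2C_O` is skew-symmetric, then with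
`M̃ = M_O + Gᵀ M G` and `C̃ = C_O + Gᵀ C G + Gᵀ M Ġ` (where `M = diag{Mᵢ}`,
`C = diag{Cᵢ}` and `G(t)` differentiable), the matrix `d/dt(M̃) − 2C̃` is
skew-symmetric. -/
theorem stmt7 (N : ℕ)
    (Mi Ci Mi' : Fin N → ℝ → Matrix (Fin 6) (Fin 6) ℝ)
    (MO CO MO' : ℝ → Matrix (Fin 6) (Fin 6) ℝ)
    (G G' : ℝ → Matrix (Fin 6 × Fin N) (Fin 6) ℝ)
    (t₀ : ℝ)
    (hMisymm : ∀ k t, (Mi k t).IsSymm)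
    (hMOsymm : ∀ t, (MO t).IsSymm)
    (hMideriv : ∀ k t i j, HasDerivAt (fun s => Mi k s i j) (Mi' k t i j) t)
    (hMOderiv : ∀ t i j, HasDerivAt (fun s => MO s i j) (MO' t i j) t)
    (hGderiv : ∀ t i j, HasDerivAt (fun s => G s i j) (G' t i j) t)
    (hskewi : ∀ k t, (Mi' k t - (2 : ℝ) • Ci k t) + (Mi' k t - (2 : ℝ) • Ci k t)ᵀ = 0)
    (hskewO : ∀ t, (MO' t - (2 : ℝ) • CO t) + (MO' t - (2 : ℝ) • CO t)ᵀ = 0)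
    (tM' : Matrix (Fin 6) (Fin 6) ℝ)
    (htM' : ∀ i j, HasDerivAt
      (fun s => (MO s + (G s)ᵀ * Matrix.blockDiagonal (fun k => Mi k s) * G s) i j)
      (tM' i j) t₀) :
    (tM' - (2 : ℝ) • (CO t₀ + (G t₀)ᵀ * Matrix.blockDiagonal (fun k => Ci k t₀) * G t₀
        + (G t₀)ᵀ * Matrix.blockDiagonal (fun k => Mi k t₀) * G' t₀)) +
      (tM' - (2 : ℝ) • (CO t₀ + (G t₀)ᵀ * Matrix.blockDiagonal (fun k => Ci k t₀) * G t₀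
        + (G t₀)ᵀ * Matrix.blockDiagonal (fun k => Mi k t₀) * G' t₀))ᵀ = 0 := by
  set B : ℝ → Matrix (Fin 6 × Fin N) (Fin 6 × Fin N) ℝ :=
    fun s => Matrix.blockDiagonal (fun k => Mi k s) with hBdef
  set B' : Matrix (Fin 6 × Fin N) (Fin 6 × Fin N) ℝ :=
    Matrix.blockDiagonal (fun k => Mi' k t₀) with hB'def
  have hBderiv : ∀ k l, HasDerivAt (fun s => B s k l) (B' k l) t₀ := by
    rintro ⟨a, m⟩ ⟨b, n⟩
    by_cases h : m = n
    · subst h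
      simpa [hBdef, hB'def, Matrix.blockDiagonal_apply] using hMideriv m t₀ a b
    · simpa [hBdef, hB'def, Matrix.blockDiagonal_apply, h] using hasDerivAt_const t₀ (0:ℝ)
  -- entrywise derivative of the combined matrix
  have key : ∀ i j, HasDerivAt
      (fun s => (MO s + (G s)ᵀ * B s * G s) i j)
      ((MO' t₀ + (G' t₀)ᵀ * B t₀ * G t₀ + (G t₀)ᵀ * B' * G t₀
        + (G t₀)ᵀ * B t₀ * G' t₀) i j) t₀ := by
    intro i j
    have : ∀ s, (MO s + (G s)ᵀ * B s * G s) i j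
        = MO s i j + ∑ l, (∑ k, G s k i * B s k l) * G s l j := by
      intro s
      simp [Matrix.add_apply, Matrix.mul_apply, Matrix.transpose_apply]
    simp only [this]
    have h2 : (MO' t₀ + (G' t₀)ᵀ * B t₀ * G t₀ + (G t₀)ᵀ * B' * G t₀
        + (G t₀)ᵀ * B t₀ * G' t₀) i j
        = MO' t₀ i j + ∑ l, ((∑ k, (G' t₀ k i * B t₀ k l + G t₀ k i * B' k l)) * G t₀ l j
            + (∑ k, G t₀ k i * B t₀ k l) * G' t₀ l j) := by
      simp [Matrix.add_apply, Matrix.mul_apply, Matrix.transpose_apply, Finset.sum_add_distrib,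
        add_mul]
      ring
    rw [h2]
    apply (hMOderiv t₀ i j).add
    apply HasDerivAt.fun_sum
    intro l _
    exact (HasDerivAt.fun_sum (fun k _ => ((hGderiv t₀ k i).mul (hBderiv k l)))).mul
      (hGderiv t₀ l j)
  have htM : tM' = MO' t₀ + (G' t₀)ᵀ * B t₀ * G t₀ + (G t₀)ᵀ * B' * G t₀
      + (G t₀)ᵀ * B t₀ * G' t₀ := by
    ext i j
    exact (htM' i j).unique (key i j)
  -- symmetry of B
  have hB : (B t₀)ᵀ = B t₀ := by
    rw [hBdef]
    rw [Matrix.blockDiagonal_transpose,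
      show (fun k => (Mi k t₀)ᵀ) = fun k => Mi k t₀ from funext fun k => hMisymm k t₀]
  set C : Matrix (Fin 6 × Fin N) (Fin 6 × Fin N) ℝ :=
    Matrix.blockDiagonal (fun k => Ci k t₀) with hCdef
  have hK : (B' - (2:ℝ) • C)ᵀ = -(B' - (2:ℝ) • C) := by
    have h0 : (B' - (2:ℝ) • C) + (B' - (2:ℝ) • C)ᵀ = 0 := by
      ext ⟨a, m⟩ ⟨b, n⟩
      by_cases h : m = n
      · subst h
        have h1 := congrFun (congrFun (hskewi m t₀) a) b
        simpa [hB'def, hCdef, Matrix.blockDiagonal_apply, Matrix.add_apply, Matrix.sub_apply,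
          Matrix.transpose_apply, Matrix.smul_apply] using h1
      · simp [hB'def, hCdef, Matrix.blockDiagonal_apply, Matrix.add_apply, Matrix.sub_apply,
          Matrix.transpose_apply, Matrix.smul_apply, h, Ne.symm h]
    exact eq_neg_of_add_eq_zero_right h0
  have hA : (MO' t₀ - (2:ℝ) • CO t₀)ᵀ = -(MO' t₀ - (2:ℝ) • CO t₀) :=
    eq_neg_of_add_eq_zero_right (hskewO t₀)
  have hMOT : (MO' t₀)ᵀ = (2:ℝ) • (CO t₀)ᵀ - MO' t₀ + (2:ℝ) • CO t₀ := by
    have := hA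
    simp only [Matrix.transpose_sub, Matrix.transpose_smul, neg_sub] at this
    linear_combination (norm := abel) this
  have hBT : B'ᵀ = (2:ℝ) • Cᵀ - B' + (2:ℝ) • C := by
    have := hK
    simp only [Matrix.transpose_sub, Matrix.transpose_smul, neg_sub] at this
    linear_combination (norm := abel) this
  rw [htM, show Matrix.blockDiagonal (fun k => Mi k t₀) = B t₀ from rfl]
  simp only [Matrix.transpose_add, Matrix.transpose_sub, Matrix.transpose_smul,
    Matrix.transpose_mul, Matrix.transpose_transpose, hB, hMOT, hBT]
  simp only [Matrix.mul_add, Matrix.add_mul, Matrix.mul_sub, Matrix.sub_mul,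
    Matrix.smul_mul, Matrix.mul_smul, Matrix.mul_assoc, smul_add, smul_sub]
  module
end

section
/- Consider the scalar closed-loop quaternion dynamics ė_φ = (k_ζ/2)‖e_ε‖² + ½ e_ε^T w(t) restricted to the unit sphere e_φ² + ‖e_ε‖² = 1, with k_ζ > 0. If w ≡ 0, then the equilibrium (e_φ, e_ε) = (−1, 0) is unstable: any initial condition with e_φ(0) > −1 satisfies e_φ(t) nondecreasing and e_φ(t) → 1 as t → ∞. -/
/-- Helper: a function with nonnegative derivative on `Ici 0` is monotone there. -/
lemma mono_of_deriv_nonneg_Ici (f f' : ℝ → ℝ)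
    (hd : ∀ t, 0 ≤ t → HasDerivAt f (f' t) t)
    (hnn : ∀ t, 0 ≤ t → 0 ≤ f' t) :
    MonotoneOn f (Set.Ici 0) := by
  apply monotoneOn_of_deriv_nonneg (convex_Ici 0)
  · exact fun x hx => ((hd x hx).continuousAt).continuousWithinAt
  · intro x hx
    rw [interior_Ici] at hx
    exact (hd x (le_of_lt hx)).differentiableAt.differentiableWithinAt
  · intro x hx
    rw [interior_Ici] at hx
    rw [(hd x (le_of_lt hx)).deriv]
    exact hnn x (le_of_lt hx)

/-- Consider the scalar closed-loop quaternion dynamics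
`ė_φ = (k_ζ/2)‖e_ε‖² + ½ e_εᵀ w(t)` restricted to the unit sphere
`e_φ² + ‖e_ε‖² = 1`, with `k_ζ > 0`. If `w ≡ 0`, so that
`ė_φ = (k_ζ/2)(1 − e_φ²)`, then the equilibrium `(e_φ, e_ε) = (−1, 0)` is unstable:
any initial condition with `e_φ(0) > −1` satisfies `e_φ(t)` nondecreasing and
`e_φ(t) → 1` as `t → ∞`. -/
theorem stmt10 (kζ : ℝ) (hk : 0 < kζ) (eφ : ℝ → ℝ)
    (hsphere : ∀ t, 0 ≤ t → eφ t ∈ Set.Icc (-1 : ℝ) 1)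
    (hdyn : ∀ t, 0 ≤ t → HasDerivAt eφ ((kζ / 2) * (1 - (eφ t) ^ 2)) t)
    (h0 : -1 < eφ 0) :
    MonotoneOn eφ (Set.Ici 0) ∧ Filter.Tendsto eφ Filter.atTop (nhds 1) := by
  have hmono : MonotoneOn eφ (Set.Ici 0) := by
    apply mono_of_deriv_nonneg_Ici eφ _ hdyn
    intro t ht
    have h := hsphere t ht
    have h1 : (eφ t)^2 ≤ 1 := by nlinarith [h.1, h.2]
    nlinarith
  refine ⟨hmono, ?_⟩
  -- define the monotone extension
  set f : ℝ → ℝ := fun t => eφ (max t 0) with hf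
  have hfm : Monotone f := fun s t hst =>
    hmono (le_max_right s 0) (le_max_right t 0) (max_le_max hst le_rfl)
  have hfb : BddAbove (Set.range f) := by
    refine ⟨1, ?_⟩
    rintro x ⟨t, rfl⟩
    exact (hsphere _ (le_max_right t 0)).2
  have hL : Filter.Tendsto f Filter.atTop (nhds (⨆ t, f t)) :=
    tendsto_atTop_ciSup hfm hfb
  set L : ℝ := ⨆ t, f t with hLdef
  have heq : eφ =ᶠ[Filter.atTop] f := by
    filter_upwards [Filter.eventually_ge_atTop (0:ℝ)] with t ht
    simp [hf, max_eq_left ht]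
  have hLe : Filter.Tendsto eφ Filter.atTop (nhds L) := hL.congr' heq.symm
  -- L ≤ 1
  have hL1 : L ≤ 1 := ciSup_le fun t => (hsphere _ (le_max_right t 0)).2
  -- eφ 0 ≤ L
  have hL0 : eφ 0 ≤ L := by
    have := le_ciSup hfb 0
    simpa [hf] using this
  -- all values ≤ L
  have hvL : ∀ t, 0 ≤ t → eφ t ≤ L := by
    intro t ht
    have := le_ciSup hfb t
    simpa [hf, max_eq_left ht] using this
  have hvl : ∀ t, 0 ≤ t → eφ 0 ≤ eφ t := fun t ht =>
    hmono (le_refl (0:ℝ)) ht ht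
  -- show L = 1
  have hLeq : L = 1 := by
    by_contra hne
    have hLlt : L < 1 := lt_of_le_of_ne hL1 hne
    set δ : ℝ := min (1 - (eφ 0)^2) (1 - L^2) with hδ
    have hδpos : 0 < δ := by
      apply lt_min
      · nlinarith [(hsphere 0 le_rfl).2]
      · nlinarith [mul_pos (by linarith : (0:ℝ) < 1 - L) (by linarith : (0:ℝ) < 1 + L)]
    have hδle : ∀ t, 0 ≤ t → δ ≤ 1 - (eφ t)^2 := by
      intro t ht
      have h1 := hvl t ht
      have h2 := hvL t ht
      set b : ℝ := max (-(eφ 0)) L with hb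
      have hb1 : eφ t ≤ b := le_trans h2 (le_max_right _ _)
      have hb2 : -b ≤ eφ t := le_trans (neg_le.mp (le_max_left (-(eφ 0)) L)) h1
      have hsq : (eφ t)^2 ≤ b^2 := sq_le_sq' hb2 hb1
      have hbmax : b^2 ≤ max ((eφ 0)^2) (L^2) := by
        rcases max_cases (-(eφ 0)) L with ⟨h, _⟩ | ⟨h, _⟩
        · rw [hb, h]
          simp
        · rw [hb, h]
          exact le_max_right _ _
      have hδmax : δ ≤ 1 - max ((eφ 0)^2) (L^2) := by
        rcases le_total ((eφ 0)^2) (L^2) with h | h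
        · rw [max_eq_right h]; exact min_le_right _ _
        · rw [max_eq_left h]; exact min_le_left _ _
      linarith
    set c : ℝ := kζ / 2 * δ with hc
    have hcpos : 0 < c := by positivity
    -- g t = eφ t - c t is monotone on Ici 0
    have hg : MonotoneOn (fun t => eφ t - c * t) (Set.Ici 0) := by
      apply mono_of_deriv_nonneg_Ici _ (fun t => (kζ / 2) * (1 - (eφ t)^2) - c)
      · intro t ht
        have hc' : HasDerivAt (fun y => c * y) c t := by
          simpa using (hasDerivAt_id t).const_mul c
        exact (hdyn t ht).sub hc'
      · intro t ht
        have := hδle t ht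
        have : kζ / 2 * δ ≤ kζ / 2 * (1 - (eφ t)^2) := by
          apply mul_le_mul_of_nonneg_left this (by positivity)
        simp only [hc] at *
        linarith
    -- contradiction at large t
    set T : ℝ := (2 - eφ 0) / c with hT
    have hTpos : 0 < T := by
      apply div_pos _ hcpos
      nlinarith [(hsphere 0 le_rfl).2]
    have := hg (Set.self_mem_Ici) (Set.mem_Ici.2 hTpos.le) hTpos.le
    simp only at this
    have hcT : c * T = 2 - eφ 0 := by
      rw [hT, mul_comm]; exact div_mul_cancel₀ _ hcpos.ne'
    have hb := (hsphere T hTpos.le).2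
    nlinarith
  rw [← hLeq]
  exact hLe
end
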